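/- For distinct nonzero reals u, v (with u ≠ ±v), let β(u,v) = coth(u−v) + coth(u+v). Then for pairwise distinct a_i, a_j, a_m (all nonzero, no two summing to zero), β(a_j,a_i)β(a_i,a_m) + β(a_i,a_j)β(a_j,a_m) − β(a_j,a_m)β(a_i,a_m) = 0. -/
import Mathlib


noncomputable def coth (x : ℝ) : ℝ := Real.cosh x / Real.sinh x

noncomputable def betaBCD (u v : ℝ) : ℝ := coth (u - v) + coth (u + v)

lemma cosh_sub_cosh' (u v : ℝ) :
    Real.cosh (2*u) - Real.cosh (2*v)
      = 2 * (Real.sinh (u - v) * Real.sinh (u + v)) := by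
  have h1 : Real.cosh ((u-v)+(u+v)) = Real.cosh (u-v) * Real.cosh (u+v)
      + Real.sinh (u-v) * Real.sinh (u+v) := Real.cosh_add _ _
  have h2 : Real.cosh ((u-v)-(u+v)) = Real.cosh (u-v) * Real.cosh (u+v)
      - Real.sinh (u-v) * Real.sinh (u+v) := Real.cosh_sub _ _
  have e1 : (u-v)+(u+v) = 2*u := by ring
  have e2 : (u-v)-(u+v) = -(2*v) := by ring
  rw [e1] at h1
  rw [e2, Real.cosh_neg] at h2
  linarith

lemma beta_eq (u v : ℝ) (h1 : u - v ≠ 0) (h2 : u + v ≠ 0) :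
    betaBCD u v = 2 * Real.sinh (2*u) / (Real.cosh (2*u) - Real.cosh (2*v)) := by
  have hs1 : Real.sinh (u - v) ≠ 0 := Real.sinh_ne_zero.mpr h1
  have hs2 : Real.sinh (u + v) ≠ 0 := Real.sinh_ne_zero.mpr h2
  have hnum : Real.sinh (2*u) = Real.sinh (u-v) * Real.cosh (u+v)
      + Real.cosh (u-v) * Real.sinh (u+v) := by
    rw [show 2*u = (u-v)+(u+v) by ring, Real.sinh_add]
  rw [betaBCD, coth, coth, cosh_sub_cosh', hnum]
  field_simp
  ring

theorem bcd_relation_one (ai aj am : ℝ)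
    (hi : ai ≠ 0) (hj : aj ≠ 0) (hm : am ≠ 0)
    (hij : ai ≠ aj) (him : ai ≠ am) (hjm : aj ≠ am)
    (hij' : ai + aj ≠ 0) (him' : ai + am ≠ 0) (hjm' : aj + am ≠ 0) :
    betaBCD aj ai * betaBCD ai am + betaBCD ai aj * betaBCD aj am
      - betaBCD aj am * betaBCD ai am = 0 := by
  have hd : ∀ u v : ℝ, u - v ≠ 0 → u + v ≠ 0 →
      Real.cosh (2*u) - Real.cosh (2*v) ≠ 0 := by
    intro u v h1 h2
    rw [cosh_sub_cosh']
    exact mul_ne_zero two_ne_zero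
      (mul_ne_zero (Real.sinh_ne_zero.mpr h1) (Real.sinh_ne_zero.mpr h2))
  have hij0 : ai - aj ≠ 0 := sub_ne_zero.mpr hij
  have him0 : ai - am ≠ 0 := sub_ne_zero.mpr him
  have hjm0 : aj - am ≠ 0 := sub_ne_zero.mpr hjm
  have hji0 : aj - ai ≠ 0 := sub_ne_zero.mpr hij.symm
  have hji' : aj + ai ≠ 0 := by rwa [add_comm]
  rw [beta_eq aj ai hji0 hji', beta_eq ai am him0 him',
      beta_eq ai aj hij0 hij', beta_eq aj am hjm0 hjm']
  have d1 := hd ai aj hij0 hij'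
  have d2 := hd ai am him0 him'
  have d3 := hd aj am hjm0 hjm'
  have d1' : Real.cosh (2*aj) - Real.cosh (2*ai) ≠ 0 := by
    intro h; exact d1 (by linarith)
  field_simp
  ring
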